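/- Suppose that v ↦ T(v,ξ) is continuously differentiable for each ξ ∈ Ξ, that L > 0 satisfies both ‖T(v,ξ) − T(v,ξ')‖ ≤ L‖ξ − ξ'‖ and ‖∇_v T(v,ξ) − ∇_v T(v,ξ')‖ ≤ L‖ξ − ξ'‖ for all v ∈ V and ξ, ξ' ∈ Ξ, and that C₀' := sup_{f∈𝔽, ξ∈Ξ} ‖Δᵀ ∇_v T(Δf,ξ) Δ‖ is finite. Then for every t > 0, every f ∈ 𝔽, every ξ, ξ' ∈ Ξ and every row index r ∈ {1,…,N}, the r‑th row of the Jacobian ∇_f û(f,·,t) satisfies ‖[∇_f û(f,ξ,t)]_r − [∇_f û(f,ξ',t)]_r‖ ≤ L ‖Δᵀ‖ ( θ1‖Δ‖ + θ2‖Δ‖ + θ2 C₀'/(2t) ) ‖ξ − ξ'‖, where [M]_r denotes the r‑th row of the matrix M regarded as a vector in ℝ^N. -/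

import Mathlib

open MeasureTheory

/-- The smoothed lateness penalty `h(z,t)`: `0` for `z < -t`, `(z+t)^2/(4t)` for
`-t ≤ z ≤ t`, and `z` for `z > t`. -/
noncomputable def hpen (t z : ℝ) : ℝ :=
  if z < -t then 0 else if z ≤ t then (z + t) ^ 2 / (4 * t) else z

variable {A N k : ℕ}

/-- The path travel time `C(f,ξ) = Δᵀ T(Δf, ξ)`, where the arc–path incidence matrix
`Δ` is encoded as a continuous linear map and `Δᵀ` as its (Euclidean) adjoint. -/
noncomputable def pathTime (Δ : EuclideanSpace ℝ (Fin N) →L[ℝ] EuclideanSpace ℝ (Fin A))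
    (T : EuclideanSpace ℝ (Fin A) → EuclideanSpace ℝ (Fin k) → EuclideanSpace ℝ (Fin A))
    (f : EuclideanSpace ℝ (Fin N)) (ξ : EuclideanSpace ℝ (Fin k)) :
    EuclideanSpace ℝ (Fin N) :=
  ContinuousLinearMap.adjoint Δ (T (Δ f) ξ)

/-- The smoothed disutility `û(f,ξ,t)` with components
`û_r = θ0 d_r + θ1 C_r(f,ξ) + θ2 h(C_r(f,ξ) − τ_r, t)`. -/
noncomputable def uhat (Δ : EuclideanSpace ℝ (Fin N) →L[ℝ] EuclideanSpace ℝ (Fin A))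
    (θ0 θ1 θ2 : ℝ) (d τ : EuclideanSpace ℝ (Fin N))
    (T : EuclideanSpace ℝ (Fin A) → EuclideanSpace ℝ (Fin k) → EuclideanSpace ℝ (Fin A))
    (f : EuclideanSpace ℝ (Fin N)) (ξ : EuclideanSpace ℝ (Fin k)) (t : ℝ) :
    EuclideanSpace ℝ (Fin N) :=
  WithLp.toLp 2 (fun r => θ0 * d r + θ1 * pathTime Δ T f ξ r + θ2 * hpen t (pathTime Δ T f ξ r - τ r))

noncomputable def gpen (t z : ℝ) : ℝ := (max 0 (z + t) - max 0 (z - t)) / (2 * t)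

lemma maxsq_hasDerivAt (z : ℝ) : HasDerivAt (fun z : ℝ => max 0 z ^ 2) (2 * max 0 z) z := by
  rcases lt_trichotomy z 0 with h | h | h
  · have he : (fun z : ℝ => max 0 z ^ 2) =ᶠ[nhds z] fun _ => (0:ℝ) := by
      filter_upwards [Iio_mem_nhds h] with x hx
      simp [max_eq_left (Set.mem_Iio.mp hx).le]
    have : HasDerivAt (fun _ : ℝ => (0:ℝ)) (2 * max 0 z) z := by
      simpa [max_eq_left h.le] using (hasDerivAt_const z (0:ℝ))
    exact this.congr_of_eventuallyEq he
  · subst h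
    have h1 : HasDerivWithinAt (fun z : ℝ => max 0 z ^ 2) 0 (Set.Iic 0) 0 := by
      refine (hasDerivWithinAt_const (0:ℝ) (Set.Iic 0) (0:ℝ)).congr
        (fun x hx => ?_) (by norm_num)
      simp [max_eq_left (Set.mem_Iic.mp hx)]
    have h2 : HasDerivWithinAt (fun z : ℝ => max 0 z ^ 2) 0 (Set.Ici 0) 0 := by
      have hp : HasDerivWithinAt (fun x : ℝ => x ^ 2) 0 (Set.Ici 0) 0 := by
        simpa using (hasDerivAt_pow 2 (0:ℝ)).hasDerivWithinAt (s := Set.Ici 0)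
      refine hp.congr (fun x hx => ?_) (by norm_num)
      simp [max_eq_right (Set.mem_Ici.mp hx)]
    have := h1.union h2
    rw [Set.Iic_union_Ici, hasDerivWithinAt_univ] at this
    simpa using this
  · have he : (fun z : ℝ => max 0 z ^ 2) =ᶠ[nhds z] fun x => x ^ 2 := by
      filter_upwards [Ioi_mem_nhds h] with x hx
      simp [max_eq_right (le_of_lt (Set.mem_Ioi.mp hx))]
    have : HasDerivAt (fun x : ℝ => x ^ 2) (2 * max 0 z) z := by
      simpa [max_eq_right h.le, mul_comm] using hasDerivAt_pow 2 z
    exact this.congr_of_eventuallyEq he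

lemma hpen_eq {t : ℝ} (ht : 0 < t) (z : ℝ) :
    hpen t z = (max 0 (z + t) ^ 2 - max 0 (z - t) ^ 2) / (4 * t) := by
  unfold hpen
  rcases lt_or_ge z (-t) with h | h
  · rw [if_pos h, max_eq_left (by linarith), max_eq_left (by linarith)]
    simp
  · rw [if_neg (not_lt.mpr h)]
    rcases le_or_gt z t with h2 | h2
    · rw [if_pos h2, max_eq_right (by linarith), max_eq_left (by linarith)]
      ring
    · rw [if_neg (not_le.mpr h2), max_eq_right (by linarith), max_eq_right (by linarith)]
      field_simp
      ring

lemma hpen_hasDerivAt {t : ℝ} (ht : 0 < t) (z : ℝ) :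
    HasDerivAt (hpen t) (gpen t z) z := by
  have h1 : HasDerivAt (fun z : ℝ => max 0 (z + t) ^ 2) (2 * max 0 (z + t)) z := by
    simpa [Function.comp_def] using (maxsq_hasDerivAt (z + t)).comp z ((hasDerivAt_id z).add_const t)
  have h2 : HasDerivAt (fun z : ℝ => max 0 (z - t) ^ 2) (2 * max 0 (z - t)) z := by
    simpa [Function.comp_def] using (maxsq_hasDerivAt (z - t)).comp z ((hasDerivAt_id z).sub_const t)
  have h3 := (h1.sub h2).div_const (4 * t)
  have : (2 * max 0 (z + t) - 2 * max 0 (z - t)) / (4 * t) = gpen t z := by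
    unfold gpen; field_simp; ring
  rw [this] at h3
  exact h3.congr_of_eventuallyEq (Filter.Eventually.of_forall fun x => hpen_eq ht x)

lemma gpen_eq_minmax {t : ℝ} (ht : 0 < t) (z : ℝ) :
    gpen t z = min (max (z + t) 0) (2 * t) / (2 * t) := by
  unfold gpen
  rcases lt_or_ge z (-t) with h | h
  · rw [max_eq_left (by linarith : z + t ≤ 0), max_eq_left (by linarith : z - t ≤ 0),
      max_comm, max_eq_left (by linarith : z + t ≤ 0), min_eq_left (by linarith)]
    ring
  · rcases le_or_gt z t with h2 | h2
    · rw [max_eq_right (by linarith : (0:ℝ) ≤ z + t), max_eq_left (by linarith : z - t ≤ 0),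
        max_eq_left (by linarith : (0:ℝ) ≤ z + t), min_eq_left (by linarith)]
      ring
    · rw [max_eq_right (by linarith : (0:ℝ) ≤ z + t), max_eq_right (by linarith : (0:ℝ) ≤ z - t),
        max_eq_left (by linarith : (0:ℝ) ≤ z + t), min_eq_right (by linarith)]
      ring

lemma gpen_nonneg {t : ℝ} (ht : 0 < t) (z : ℝ) : 0 ≤ gpen t z := by
  rw [gpen_eq_minmax ht]
  apply div_nonneg _ (by linarith)
  exact le_min (le_max_right _ _) (by linarith)

lemma gpen_le_one {t : ℝ} (ht : 0 < t) (z : ℝ) : gpen t z ≤ 1 := by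
  rw [gpen_eq_minmax ht]
  rw [div_le_one (by linarith)]
  exact min_le_right _ _

lemma gpen_lip {t : ℝ} (ht : 0 < t) (z w : ℝ) :
    |gpen t z - gpen t w| ≤ |z - w| / (2 * t) := by
  rw [gpen_eq_minmax ht, gpen_eq_minmax ht, div_sub_div_same, abs_div,
    abs_of_pos (by linarith : (0:ℝ) < 2 * t)]
  have key : |min (max (z + t) 0) (2 * t) - min (max (w + t) 0) (2 * t)| ≤ |z - w| := by
    calc |min (max (z + t) 0) (2 * t) - min (max (w + t) 0) (2 * t)|
        ≤ max |max (z + t) 0 - max (w + t) 0| |2 * t - 2 * t| :=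
          abs_min_sub_min_le_max _ _ _ _
      _ ≤ |max (z + t) 0 - max (w + t) 0| := by simp
      _ ≤ |(z + t) - (w + t)| := abs_max_sub_max_le_abs _ _ _
      _ = |z - w| := by ring_nf
  exact div_le_div_of_nonneg_right key (by linarith)

lemma abs_coord_le_norm {n : ℕ} (x : EuclideanSpace ℝ (Fin n)) (r : Fin n) : |x r| ≤ ‖x‖ := by
  rw [EuclideanSpace.norm_eq]
  rw [show |x r| = Real.sqrt (‖x r‖ ^ 2) by
    rw [Real.sqrt_sq_eq_abs]; simp [Real.norm_eq_abs, abs_abs]]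
  apply Real.sqrt_le_sqrt
  exact Finset.single_le_sum (f := fun i => ‖x i‖ ^ 2) (fun i _ => sq_nonneg _) (Finset.mem_univ r)

lemma norm_euclid_proj_le {n : ℕ} (r : Fin n) :
    ‖(EuclideanSpace.proj r : EuclideanSpace ℝ (Fin n) →L[ℝ] ℝ)‖ ≤ 1 := by
  refine ContinuousLinearMap.opNorm_le_bound _ zero_le_one fun x => ?_
  rw [one_mul]
  simpa [Real.norm_eq_abs] using abs_coord_le_norm x r

set_option maxHeartbeats 2000000 in
set_option synthInstance.maxHeartbeats 400000 in
/-- Lipschitz continuity, in the uncertain parameter `ξ`, of the rows of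
the Jacobian of the smoothed disutility. Under Lipschitz continuity of `T` and
`∇_v T` in `ξ` (with constant `L`) and a uniform bound `C₀'` on `‖Δᵀ ∇_v T(Δf,ξ) Δ‖`,
each row `r` of `∇_f û(f,·,t)` (the functional `w ↦ (∇_f û(f,ξ,t) w)_r`) satisfies
`‖[∇_f û(f,ξ,t)]_r − [∇_f û(f,ξ',t)]_r‖ ≤ L‖Δᵀ‖(θ1‖Δ‖ + θ2‖Δ‖ + θ2 C₀'/(2t))‖ξ − ξ'‖`. -/
theorem smoothed_disutility_jacobian_rows_lipschitz_in_xi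
    (A N k : ℕ) (Δ : EuclideanSpace ℝ (Fin N) →L[ℝ] EuclideanSpace ℝ (Fin A))
    (θ0 θ1 θ2 : ℝ) (hθ0 : 0 ≤ θ0) (hθ1 : 0 ≤ θ1) (hθ2 : 0 ≤ θ2)
    (d τ : EuclideanSpace ℝ (Fin N)) (Ξ : Set (EuclideanSpace ℝ (Fin k)))
    (T : EuclideanSpace ℝ (Fin A) → EuclideanSpace ℝ (Fin k) → EuclideanSpace ℝ (Fin A))
    (𝔽 : Set (EuclideanSpace ℝ (Fin N))) (h𝔽 : IsCompact 𝔽)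
    (hTdiff : ∀ ξ ∈ Ξ, ContDiff ℝ 1 (fun v => T v ξ))
    (L : ℝ) (hL : 0 < L)
    (hTlip : ∀ v ∈ Δ '' 𝔽, ∀ ξ ∈ Ξ, ∀ ξ' ∈ Ξ, ‖T v ξ - T v ξ'‖ ≤ L * ‖ξ - ξ'‖)
    (hTdlip : ∀ v ∈ Δ '' 𝔽, ∀ ξ ∈ Ξ, ∀ ξ' ∈ Ξ,
      ‖fderiv ℝ (fun v => T v ξ) v - fderiv ℝ (fun v => T v ξ') v‖ ≤ L * ‖ξ - ξ'‖)
    (C₀' : ℝ)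
    (hC₀' : ∀ f ∈ 𝔽, ∀ ξ ∈ Ξ,
      ‖(ContinuousLinearMap.adjoint Δ).comp
          (((fderiv ℝ (fun v => T v ξ) (Δ f)).comp Δ))‖ ≤ C₀') :
    ∀ t : ℝ, 0 < t → ∀ f ∈ 𝔽, ∀ ξ ∈ Ξ, ∀ ξ' ∈ Ξ, ∀ r : Fin N,
      ‖(EuclideanSpace.proj r).comp (fderiv ℝ (fun f => uhat Δ θ0 θ1 θ2 d τ T f ξ t) f) -
        (EuclideanSpace.proj r).comp
          (fderiv ℝ (fun f => uhat Δ θ0 θ1 θ2 d τ T f ξ' t) f)‖ ≤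
        L * ‖ContinuousLinearMap.adjoint Δ‖ *
          (θ1 * ‖Δ‖ + θ2 * ‖Δ‖ + θ2 * C₀' / (2 * t)) * ‖ξ - ξ'‖ := by
  intro t ht f hf ξ hξ ξ' hξ' r
  have key : ∀ ζ ∈ Ξ, ∀ i : Fin N,
      HasFDerivAt (fun g => uhat Δ θ0 θ1 θ2 d τ T g ζ t i)
        ((θ1 + θ2 * gpen t (pathTime Δ T f ζ i - τ i)) •
          ((EuclideanSpace.proj i).comp ((ContinuousLinearMap.adjoint Δ).comp
            ((fderiv ℝ (fun v => T v ζ) (Δ f)).comp Δ)))) f := by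
    intro ζ hζ i
    have hTd : HasFDerivAt (fun v => T v ζ) (fderiv ℝ (fun v => T v ζ) (Δ f)) (Δ f) :=
      (((hTdiff ζ hζ).differentiable one_ne_zero) (Δ f)).hasFDerivAt
    have hC : HasFDerivAt (fun g => pathTime Δ T g ζ)
        ((ContinuousLinearMap.adjoint Δ).comp ((fderiv ℝ (fun v => T v ζ) (Δ f)).comp Δ)) f :=
      ((ContinuousLinearMap.adjoint Δ).hasFDerivAt).comp f (hTd.comp f Δ.hasFDerivAt)
    have hCi : HasFDerivAt (fun g => pathTime Δ T g ζ i)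
        ((EuclideanSpace.proj i).comp ((ContinuousLinearMap.adjoint Δ).comp
          ((fderiv ℝ (fun v => T v ζ) (Δ f)).comp Δ))) f :=
      by have := ((EuclideanSpace.proj i : EuclideanSpace ℝ (Fin N) →L[ℝ] ℝ).hasFDerivAt
        (x := pathTime Δ T f ζ)).comp f hC; exact this
    have hh : HasFDerivAt (fun g => hpen t (pathTime Δ T g ζ i - τ i))
        (gpen t (pathTime Δ T f ζ i - τ i) • ((EuclideanSpace.proj i).comp
          ((ContinuousLinearMap.adjoint Δ).comp ((fderiv ℝ (fun v => T v ζ) (Δ f)).comp Δ)))) f :=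
      (hpen_hasDerivAt ht _).comp_hasFDerivAt f (hCi.sub_const (τ i))
    have hsum := ((hCi.const_mul θ1).const_add (θ0 * d i)).add (hh.const_mul θ2)
    refine hsum.congr_fderiv ?_
    rw [add_smul, mul_smul]
  have hproj : ∀ ζ ∈ Ξ,
      (EuclideanSpace.proj r).comp (fderiv ℝ (fun g => uhat Δ θ0 θ1 θ2 d τ T g ζ t) f) =
        (θ1 + θ2 * gpen t (pathTime Δ T f ζ r - τ r)) •
          ((EuclideanSpace.proj r).comp ((ContinuousLinearMap.adjoint Δ).comp
            ((fderiv ℝ (fun v => T v ζ) (Δ f)).comp Δ))) := by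
    intro ζ hζ
    have hdiff : DifferentiableAt ℝ (fun g => uhat Δ θ0 θ1 θ2 d τ T g ζ t) f :=
      (differentiableAt_piLp 2).mpr fun i => (key ζ hζ i).differentiableAt
    have h1 : fderiv ℝ ((EuclideanSpace.proj r : EuclideanSpace ℝ (Fin N) →L[ℝ] ℝ) ∘
          (fun g => uhat Δ θ0 θ1 θ2 d τ T g ζ t)) f
        = (fderiv ℝ (EuclideanSpace.proj r : EuclideanSpace ℝ (Fin N) →L[ℝ] ℝ)
            (uhat Δ θ0 θ1 θ2 d τ T f ζ t)).comp
          (fderiv ℝ (fun g => uhat Δ θ0 θ1 θ2 d τ T g ζ t) f) :=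
      fderiv_comp f (ContinuousLinearMap.differentiableAt _) hdiff
    rw [ContinuousLinearMap.fderiv] at h1
    rw [← h1]
    exact (key ζ hζ r).fderiv
  rw [hproj ξ hξ, hproj ξ' hξ']
  set Δt := ContinuousLinearMap.adjoint Δ with hΔt
  set D := fderiv ℝ (fun v => T v ξ) (Δ f) with hD
  set D' := fderiv ℝ (fun v => T v ξ') (Δ f) with hD'
  set P := (EuclideanSpace.proj r).comp (Δt.comp (D.comp Δ)) with hP
  set P' := (EuclideanSpace.proj r).comp (Δt.comp (D'.comp Δ)) with hP'
  set a := gpen t (pathTime Δ T f ξ r - τ r) with ha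
  set a' := gpen t (pathTime Δ T f ξ' r - τ r) with ha'
  have hmem : Δ f ∈ Δ '' 𝔽 := ⟨f, hf, rfl⟩
  have hC0nn : 0 ≤ C₀' := le_trans (norm_nonneg _) (hC₀' f hf ξ hξ)
  -- bound ‖P - P'‖
  have hPP : ‖P - P'‖ ≤ ‖Δt‖ * (L * ‖ξ - ξ'‖ * ‖Δ‖) := by
    have e1 : P - P' = (EuclideanSpace.proj r).comp (Δt.comp (((D - D').comp Δ))) := by
      rw [ContinuousLinearMap.sub_comp, ContinuousLinearMap.comp_sub,
        ContinuousLinearMap.comp_sub]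
    rw [e1]
    calc ‖(EuclideanSpace.proj r).comp (Δt.comp (((D - D').comp Δ)))‖
        ≤ ‖(EuclideanSpace.proj r : EuclideanSpace ℝ (Fin N) →L[ℝ] ℝ)‖ *
            ‖Δt.comp ((D - D').comp Δ)‖ := ContinuousLinearMap.opNorm_comp_le _ _
      _ ≤ 1 * ‖Δt.comp ((D - D').comp Δ)‖ := by
          gcongr
          exact norm_euclid_proj_le r
      _ = ‖Δt.comp ((D - D').comp Δ)‖ := one_mul _
      _ ≤ ‖Δt‖ * ‖(D - D').comp Δ‖ := ContinuousLinearMap.opNorm_comp_le _ _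
      _ ≤ ‖Δt‖ * (‖D - D'‖ * ‖Δ‖) := by
          gcongr
          exact ContinuousLinearMap.opNorm_comp_le _ _
      _ ≤ ‖Δt‖ * (L * ‖ξ - ξ'‖ * ‖Δ‖) := by
          gcongr
          exact hTdlip (Δ f) hmem ξ hξ ξ' hξ'
  have hXnn : 0 ≤ ‖Δt‖ * (L * ‖ξ - ξ'‖ * ‖Δ‖) := by positivity
  -- bound |a|
  have hab : |a| ≤ 1 := by
    rw [abs_of_nonneg (gpen_nonneg ht _)]
    exact gpen_le_one ht _
  -- bound |a - a'|
  have haa : |a - a'| ≤ ‖Δt‖ * (L * ‖ξ - ξ'‖) / (2 * t) := by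
    have h1 : |a - a'| ≤ |(pathTime Δ T f ξ r - τ r) - (pathTime Δ T f ξ' r - τ r)| / (2 * t) :=
      gpen_lip ht _ _
    have h2 : (pathTime Δ T f ξ r - τ r) - (pathTime Δ T f ξ' r - τ r)
        = (pathTime Δ T f ξ - pathTime Δ T f ξ') r := by
      simp only [PiLp.sub_apply]
      ring
    have h3 : |(pathTime Δ T f ξ - pathTime Δ T f ξ') r| ≤ ‖pathTime Δ T f ξ - pathTime Δ T f ξ'‖ :=
      abs_coord_le_norm _ r
    have h4 : ‖pathTime Δ T f ξ - pathTime Δ T f ξ'‖ ≤ ‖Δt‖ * (L * ‖ξ - ξ'‖) := by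
      have : pathTime Δ T f ξ - pathTime Δ T f ξ' = Δt (T (Δ f) ξ - T (Δ f) ξ') := by
        rw [map_sub]; rfl
      rw [this]
      calc ‖Δt (T (Δ f) ξ - T (Δ f) ξ')‖ ≤ ‖Δt‖ * ‖T (Δ f) ξ - T (Δ f) ξ'‖ :=
            ContinuousLinearMap.le_opNorm _ _
        _ ≤ ‖Δt‖ * (L * ‖ξ - ξ'‖) := by
            gcongr
            exact hTlip (Δ f) hmem ξ hξ ξ' hξ'
    calc |a - a'| ≤ |(pathTime Δ T f ξ r - τ r) - (pathTime Δ T f ξ' r - τ r)| / (2 * t) := h1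
      _ ≤ ‖Δt‖ * (L * ‖ξ - ξ'‖) / (2 * t) := by
          gcongr
          rw [h2]
          exact le_trans h3 h4
  -- bound ‖P'‖
  have hP'b : ‖P'‖ ≤ C₀' := by
    calc ‖P'‖ ≤ ‖(EuclideanSpace.proj r : EuclideanSpace ℝ (Fin N) →L[ℝ] ℝ)‖ *
          ‖Δt.comp (D'.comp Δ)‖ := ContinuousLinearMap.opNorm_comp_le _ _
      _ ≤ 1 * C₀' :=
          mul_le_mul (norm_euclid_proj_le r) (hC₀' f hf ξ' hξ') (norm_nonneg _) zero_le_one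
      _ = C₀' := one_mul _
  have hdecomp : (θ1 + θ2 * a) • P - (θ1 + θ2 * a') • P'
      = θ1 • (P - P') + (θ2 * a) • (P - P') + (θ2 * (a - a')) • P' := by
    module
  rw [hdecomp]
  calc ‖θ1 • (P - P') + (θ2 * a) • (P - P') + (θ2 * (a - a')) • P'‖
      ≤ ‖θ1 • (P - P')‖ + ‖(θ2 * a) • (P - P')‖ + ‖(θ2 * (a - a')) • P'‖ := norm_add₃_le
    _ ≤ |θ1| * ‖P - P'‖ + |θ2 * a| * ‖P - P'‖ + |θ2 * (a - a')| * ‖P'‖ := by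
        have n1 : ‖θ1 • (P - P')‖ ≤ |θ1| * ‖P - P'‖ := by
          simpa [Real.norm_eq_abs] using norm_smul_le θ1 (P - P')
        have n2 : ‖(θ2 * a) • (P - P')‖ ≤ |θ2 * a| * ‖P - P'‖ := by
          simpa [Real.norm_eq_abs, abs_mul] using norm_smul_le (θ2 * a) (P - P')
        have n3 : ‖(θ2 * (a - a')) • P'‖ ≤ |θ2 * (a - a')| * ‖P'‖ := by
          simpa [Real.norm_eq_abs, abs_mul] using norm_smul_le (θ2 * (a - a')) P'
        linarith
    _ ≤ θ1 * (‖Δt‖ * (L * ‖ξ - ξ'‖ * ‖Δ‖)) + θ2 * (‖Δt‖ * (L * ‖ξ - ξ'‖ * ‖Δ‖)) +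
          θ2 * (‖Δt‖ * (L * ‖ξ - ξ'‖) / (2 * t)) * C₀' := by
        have b1 : |θ1| * ‖P - P'‖ ≤ θ1 * (‖Δt‖ * (L * ‖ξ - ξ'‖ * ‖Δ‖)) := by
          rw [abs_of_nonneg hθ1]; exact mul_le_mul_of_nonneg_left hPP hθ1
        have b2 : |θ2 * a| * ‖P - P'‖ ≤ θ2 * (‖Δt‖ * (L * ‖ξ - ξ'‖ * ‖Δ‖)) := by
          have : |θ2 * a| ≤ θ2 := by
            rw [abs_mul, abs_of_nonneg hθ2]
            calc θ2 * |a| ≤ θ2 * 1 := mul_le_mul_of_nonneg_left hab hθ2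
              _ = θ2 := mul_one _
          exact mul_le_mul this hPP (norm_nonneg _) hθ2
        have b3 : |θ2 * (a - a')| * ‖P'‖ ≤ θ2 * (‖Δt‖ * (L * ‖ξ - ξ'‖) / (2 * t)) * C₀' := by
          have h5 : |θ2 * (a - a')| ≤ θ2 * (‖Δt‖ * (L * ‖ξ - ξ'‖) / (2 * t)) := by
            rw [abs_mul, abs_of_nonneg hθ2]
            exact mul_le_mul_of_nonneg_left haa hθ2
          exact mul_le_mul h5 hP'b (norm_nonneg _) (by positivity)
        linarith
    _ = L * ‖Δt‖ * (θ1 * ‖Δ‖ + θ2 * ‖Δ‖ + θ2 * C₀' / (2 * t)) * ‖ξ - ξ'‖ := by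
        field_simp
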